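/- The derivative q' of the stationary density q(θ) = exp(2Kr cos θ)/(2π I₀(2Kr)) satisfies L_q q' = 0, where L_q u = (1/2)u'' − (u·(J*q) + q·(J*u))' with J(θ) = −K sin θ; i.e. q' lies in the kernel of the linearized operator. -/

import Mathlib

open Real MeasureTheory intervalIntegral

/-- Modified Bessel function of the first kind of order `j` (integral formula). -/
noncomputable def besselI (j : ℕ) (x : ℝ) : ℝ :=
  (1 / (2 * π)) * ∫ θ in (0:ℝ)..(2 * π), (Real.cos θ) ^ j * Real.exp (x * Real.cos θ)

/-- The stationary density `q(θ) = exp(2Kr cos θ)/(2π I₀(2Kr))`. -/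
noncomputable def q (K r θ : ℝ) : ℝ :=
  Real.exp (2 * K * r * Real.cos θ) / (2 * π * besselI 0 (2 * K * r))

/-- Convolution with `J(θ) = -K sin θ` on the circle. -/
noncomputable def Jconv (K : ℝ) (p : ℝ → ℝ) (θ : ℝ) : ℝ :=
  ∫ θ' in (0:ℝ)..(2 * π), (-K * Real.sin (θ - θ')) * p θ'

lemma besselI0_pos (x : ℝ) : 0 < besselI 0 x := by
  unfold besselI
  have h1 : (0:ℝ) < 1 / (2 * π) := by positivity
  refine mul_pos h1 ?_
  refine intervalIntegral_pos_of_pos (f := fun θ => (Real.cos θ) ^ 0 * Real.exp (x * Real.cos θ))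
    ((by continuity : Continuous fun θ => (Real.cos θ) ^ 0 * Real.exp (x * Real.cos θ)).intervalIntegrable _ _) (fun θ => by positivity) (by positivity)

lemma integral_sin_exp (c : ℝ) (hc : c ≠ 0) :
    ∫ θ in (0:ℝ)..(2 * π), Real.sin θ * Real.exp (c * Real.cos θ) = 0 := by
  have h : ∀ θ ∈ Set.uIcc (0:ℝ) (2 * π),
      HasDerivAt (fun θ => -(1 / c) * Real.exp (c * Real.cos θ))
        (Real.sin θ * Real.exp (c * Real.cos θ)) θ := by
    intro θ _
    have h1 : HasDerivAt (fun θ => c * Real.cos θ) (c * (-Real.sin θ)) θ :=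
      (Real.hasDerivAt_cos θ).const_mul c
    have h2 := (h1.exp).const_mul (-(1 / c))
    refine h2.congr_deriv ?_
    field_simp
  rw [intervalIntegral.integral_eq_sub_of_hasDerivAt h
    ((by continuity : Continuous fun θ => Real.sin θ * Real.exp (c * Real.cos θ)).intervalIntegrable _ _)]
  simp [Real.cos_two_pi]

lemma integral_sin_cos_exp (c : ℝ) (hc : c ≠ 0) :
    ∫ θ in (0:ℝ)..(2 * π), (Real.sin θ * Real.cos θ) * Real.exp (c * Real.cos θ) = 0 := by
  have h : ∀ θ ∈ Set.uIcc (0:ℝ) (2 * π),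
      HasDerivAt (fun θ => (-(1 / c) * Real.cos θ + 1 / c ^ 2) * Real.exp (c * Real.cos θ))
        ((Real.sin θ * Real.cos θ) * Real.exp (c * Real.cos θ)) θ := by
    intro θ _
    have h1 : HasDerivAt (fun θ => c * Real.cos θ) (c * (-Real.sin θ)) θ :=
      (Real.hasDerivAt_cos θ).const_mul c
    have h2 : HasDerivAt (fun θ => -(1 / c) * Real.cos θ + 1 / c ^ 2)
        (-(1 / c) * (-Real.sin θ)) θ :=
      ((Real.hasDerivAt_cos θ).const_mul (-(1 / c))).add_const _
    have h3 := h2.mul h1.exp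
    refine h3.congr_deriv ?_
    field_simp
    ring
  rw [intervalIntegral.integral_eq_sub_of_hasDerivAt h
    ((by continuity : Continuous fun θ => (Real.sin θ * Real.cos θ) * Real.exp (c * Real.cos θ)).intervalIntegrable _ _)]
  simp [Real.cos_two_pi, Real.sin_two_pi]

lemma integral_sin_sq_exp (c : ℝ) (hc : c ≠ 0) :
    ∫ θ in (0:ℝ)..(2 * π), Real.sin θ ^ 2 * Real.exp (c * Real.cos θ)
      = (1 / c) * ∫ θ in (0:ℝ)..(2 * π), Real.cos θ * Real.exp (c * Real.cos θ) := by
  have h : ∀ θ ∈ Set.uIcc (0:ℝ) (2 * π),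
      HasDerivAt (fun θ => -(1 / c) * (Real.sin θ * Real.exp (c * Real.cos θ)))
        (Real.sin θ ^ 2 * Real.exp (c * Real.cos θ)
          - (1 / c) * (Real.cos θ * Real.exp (c * Real.cos θ))) θ := by
    intro θ _
    have h1 : HasDerivAt (fun θ => c * Real.cos θ) (c * (-Real.sin θ)) θ :=
      (Real.hasDerivAt_cos θ).const_mul c
    have h2 := (((Real.hasDerivAt_sin θ).mul h1.exp).const_mul (-(1 / c)))
    refine h2.congr_deriv ?_
    field_simp
    ring
  have hint : ∫ θ in (0:ℝ)..(2 * π),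
      (Real.sin θ ^ 2 * Real.exp (c * Real.cos θ)
        - (1 / c) * (Real.cos θ * Real.exp (c * Real.cos θ))) = 0 := by
    rw [intervalIntegral.integral_eq_sub_of_hasDerivAt h
      ((by continuity : Continuous fun θ => Real.sin θ ^ 2 * Real.exp (c * Real.cos θ)
        - (1 / c) * (Real.cos θ * Real.exp (c * Real.cos θ))).intervalIntegrable _ _)]
    simp [Real.sin_two_pi]
  rw [intervalIntegral.integral_sub
      ((by continuity : Continuous fun θ => Real.sin θ ^ 2 * Real.exp (c * Real.cos θ)).intervalIntegrable _ _)
      ((by continuity : Continuous fun θ => (1 / c) * (Real.cos θ * Real.exp (c * Real.cos θ))).intervalIntegrable _ _),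
    intervalIntegral.integral_const_mul] at hint
  linarith

lemma integral_cos_exp (c : ℝ) :
    ∫ θ in (0:ℝ)..(2 * π), Real.cos θ * Real.exp (c * Real.cos θ) = 2 * π * besselI 1 c := by
  unfold besselI
  rw [← mul_assoc]
  field_simp
  congr 1
  funext θ
  ring

example : True := trivial

lemma hasDerivAt_q (K r θ : ℝ) :
    HasDerivAt (q K r) (-(2 * K * r * Real.sin θ) * q K r θ) θ := by
  have h1 : HasDerivAt (fun θ => 2 * K * r * Real.cos θ) (2 * K * r * (-Real.sin θ)) θ :=
    (Real.hasDerivAt_cos θ).const_mul (2 * K * r)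
  have h2 := h1.exp.div_const (2 * π * besselI 0 (2 * K * r))
  refine h2.congr_deriv ?_
  unfold q
  ring

lemma deriv_q (K r : ℝ) :
    deriv (q K r) = fun θ => -(2 * K * r * Real.sin θ) * q K r θ :=
  funext fun θ => (hasDerivAt_q K r θ).deriv

lemma deriv2_q (K r : ℝ) :
    deriv (deriv (q K r)) = fun θ =>
      ((2 * K * r) ^ 2 * Real.sin θ ^ 2 - 2 * K * r * Real.cos θ) * q K r θ := by
  funext θ
  rw [deriv_q]
  have h1 : HasDerivAt (fun θ => -(2 * K * r * Real.sin θ)) (-(2 * K * r * Real.cos θ)) θ := by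
    have := ((Real.hasDerivAt_sin θ).const_mul (2 * K * r)).neg
    exact this
  have h2 : HasDerivAt (fun θ => -(2 * K * r * Real.sin θ) * q K r θ) _ θ := h1.mul (hasDerivAt_q K r θ)
  rw [h2.deriv]
  ring

lemma Jconv_q (K r : ℝ) (hK : 1 < K) (hr : 0 < r)
    (hfix : r = besselI 1 (2 * K * r) / besselI 0 (2 * K * r)) (θ : ℝ) :
    Jconv K (q K r) θ = -(K * r) * Real.sin θ := by
  have hK0 : (0:ℝ) < K := lt_trans one_pos hK
  have hc : (2 * K * r) ≠ 0 := by positivity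
  have hA : (0:ℝ) < besselI 0 (2 * K * r) := besselI0_pos _
  have hI1 : besselI 1 (2 * K * r) = r * besselI 0 (2 * K * r) :=
    ((eq_div_iff hA.ne').mp hfix).symm
  set A := besselI 0 (2 * K * r) with hAdef
  unfold Jconv q
  have heq : (fun θ' => (-K * Real.sin (θ - θ')) * (Real.exp (2 * K * r * Real.cos θ') / (2 * π * A)))
      = fun θ' => (-K * Real.sin θ / (2 * π * A)) * (Real.cos θ' * Real.exp (2 * K * r * Real.cos θ'))
        + (K * Real.cos θ / (2 * π * A)) * (Real.sin θ' * Real.exp (2 * K * r * Real.cos θ')) := by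
    funext θ'
    rw [Real.sin_sub]
    have hpiA : 2 * π * A ≠ 0 := by positivity
    field_simp
    ring
  rw [heq, intervalIntegral.integral_add
      ((by fun_prop : Continuous fun θ' => (-K * Real.sin θ / (2 * π * A)) * (Real.cos θ' * Real.exp (2 * K * r * Real.cos θ'))).intervalIntegrable _ _)
      ((by fun_prop : Continuous fun θ' => (K * Real.cos θ / (2 * π * A)) * (Real.sin θ' * Real.exp (2 * K * r * Real.cos θ'))).intervalIntegrable _ _),
    intervalIntegral.integral_const_mul, intervalIntegral.integral_const_mul,
    integral_cos_exp, integral_sin_exp _ hc, hI1]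
  have hpiA : (2 * π * A) ≠ 0 := by positivity
  field_simp
  ring

lemma Jconv_dq (K r : ℝ) (hK : 1 < K) (hr : 0 < r)
    (hfix : r = besselI 1 (2 * K * r) / besselI 0 (2 * K * r)) (θ : ℝ) :
    Jconv K (deriv (q K r)) θ = -(K * r) * Real.cos θ := by
  have hK0 : (0:ℝ) < K := lt_trans one_pos hK
  have hc : (2 * K * r) ≠ 0 := by positivity
  have hA : (0:ℝ) < besselI 0 (2 * K * r) := besselI0_pos _
  have hI1 : besselI 1 (2 * K * r) = r * besselI 0 (2 * K * r) :=
    ((eq_div_iff hA.ne').mp hfix).symm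
  set A := besselI 0 (2 * K * r) with hAdef
  unfold Jconv
  rw [deriv_q]
  have heq : (fun θ' => (-K * Real.sin (θ - θ')) * (-(2 * K * r * Real.sin θ') * q K r θ'))
      = fun θ' => (K * (2 * K * r) * Real.sin θ / (2 * π * A)) * ((Real.sin θ' * Real.cos θ') * Real.exp (2 * K * r * Real.cos θ'))
        - (K * (2 * K * r) * Real.cos θ / (2 * π * A)) * (Real.sin θ' ^ 2 * Real.exp (2 * K * r * Real.cos θ')) := by
    funext θ'
    unfold q
    rw [← hAdef]
    rw [Real.sin_sub]
    have hpiA : 2 * π * A ≠ 0 := by positivity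
    field_simp
  rw [heq, intervalIntegral.integral_sub
      ((by fun_prop : Continuous fun θ' => (K * (2 * K * r) * Real.sin θ / (2 * π * A)) * ((Real.sin θ' * Real.cos θ') * Real.exp (2 * K * r * Real.cos θ'))).intervalIntegrable _ _)
      ((by fun_prop : Continuous fun θ' => (K * (2 * K * r) * Real.cos θ / (2 * π * A)) * (Real.sin θ' ^ 2 * Real.exp (2 * K * r * Real.cos θ'))).intervalIntegrable _ _),
    intervalIntegral.integral_const_mul, intervalIntegral.integral_const_mul,
    integral_sin_cos_exp _ hc, integral_sin_sq_exp _ hc, integral_cos_exp, hI1]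
  have hpiA : (2 * π * A) ≠ 0 := by positivity
  field_simp
  ring

/-- `q'` lies in the kernel of the linearized operator:
`L_q q' = (1/2)(q')'' − (q'·(J*q) + q·(J*q'))' = 0`. -/
theorem q_deriv_in_kernel (K r : ℝ) (hK : 1 < K) (hr : 0 < r)
    (hfix : r = besselI 1 (2 * K * r) / besselI 0 (2 * K * r)) :
    ∀ θ : ℝ,
      (1 / 2) * deriv (deriv (deriv (q K r))) θ
        - deriv (fun θ' => deriv (q K r) θ' * Jconv K (q K r) θ'
            + q K r θ' * Jconv K (deriv (q K r)) θ') θ = 0 := by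
  intro θ
  have hinner : (fun θ' => deriv (q K r) θ' * Jconv K (q K r) θ'
      + q K r θ' * Jconv K (deriv (q K r)) θ')
      = fun θ' => (1 / 2) * deriv (deriv (q K r)) θ' := by
    funext θ'
    rw [Jconv_q K r hK hr hfix θ', Jconv_dq K r hK hr hfix θ']
    rw [congrFun (deriv2_q K r) θ', congrFun (deriv_q K r) θ']
    ring
  rw [hinner, deriv_const_mul_field]
  ring
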